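/- Honest-verifier zero-knowledge of the Σ-protocol for correct blinding: for every challenge c ∈ ZMod q, the pushforward of uniform((ZMod q)ⁿ × ZMod q) under the honest prover map (B, b) ↦ ((∏ᵢ Vᵢ^{Bᵢ.val})·g^{b.val}, B + c·S, b + c·ρ) equals the pushforward of uniform((ZMod q)ⁿ × ZMod q) under the simulator map (Y, z) ↦ ((∏ᵢ Vᵢ^{Yᵢ.val})·g^{z.val}·α^{−(c.val)}, Y, z). In particular, simulated transcripts, computed without knowledge of the witness (S, ρ), are distributed identically to honest transcripts. -/
import Mathlib

private lemma pmf_map_equiv_uniform {A : Type*} [Fintype A] [Nonempty A]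
    (e : A ≃ A) : (PMF.uniformOfFintype A).map e = PMF.uniformOfFintype A := by
  ext x
  rw [PMF.map_apply]
  rw [tsum_eq_single (e.symm x)]
  · simp [PMF.uniformOfFintype_apply]
  · intro b hb
    rw [if_neg]
    intro h
    exact hb (by simp [h])

private lemma pow_mod_q {q : ℕ} {G : Type*} [CommGroup G] (hG : ∀ y : G, y ^ q = 1)
    (y : G) (a : ℕ) : y ^ (a % q) = y ^ a := by
  conv_rhs => rw [← Nat.div_add_mod a q]
  rw [pow_add, pow_mul, hG, one_pow, one_mul]

/-- Honest-verifier zero-knowledge of the Σ-protocol for correct blinding. -/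
theorem blinding_sigma_hvzk
    {q : ℕ} [Fact q.Prime]
    {G : Type*} [CommGroup G] (hG : ∀ y : G, y ^ q = 1)
    (g : G) {n : ℕ} (V : Fin n → G)
    (S : Fin n → ZMod q) (ρ : ZMod q) (α : G)
    (hα : α = (∏ i, V i ^ (S i).val) * g ^ ρ.val)
    (c : ZMod q) :
    (PMF.uniformOfFintype ((Fin n → ZMod q) × ZMod q)).map
        (fun Bb => ((∏ i, V i ^ (Bb.1 i).val) * g ^ Bb.2.val,
                    fun i => Bb.1 i + c * S i, Bb.2 + c * ρ))
      = (PMF.uniformOfFintype ((Fin n → ZMod q) × ZMod q)).map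
        (fun Yz => ((∏ i, V i ^ (Yz.1 i).val) * g ^ Yz.2.val * α ^ (-(c.val : ℤ)),
                    Yz.1, Yz.2)) := by
  haveI : NeZero q := ⟨(Fact.out : q.Prime).ne_zero⟩
  -- key exponent lemmas
  have hadd : ∀ (y : G) (a b : ZMod q), y ^ (a + b).val = y ^ a.val * y ^ b.val := by
    intro y a b
    rw [← pow_add, ← pow_mod_q hG y (a.val + b.val), ← ZMod.val_add]
  have hmul : ∀ (y : G) (a b : ZMod q), y ^ (a * b).val = (y ^ a.val) ^ b.val := by
    intro y a b
    rw [← pow_mul, ← pow_mod_q hG y (a.val * b.val), ← ZMod.val_mul]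
  -- the translation equivalence
  let e : ((Fin n → ZMod q) × ZMod q) ≃ ((Fin n → ZMod q) × ZMod q) :=
    { toFun := fun p => (fun i => p.1 i + c * S i, p.2 + c * ρ)
      invFun := fun p => (fun i => p.1 i - c * S i, p.2 - c * ρ)
      left_inv := fun p => by ext <;> simp
      right_inv := fun p => by ext <;> simp }
  have hcomm : ∀ p : ((Fin n → ZMod q) × ZMod q),
      ((∏ i, V i ^ (p.1 i).val) * g ^ p.2.val,
        fun i => p.1 i + c * S i, p.2 + c * ρ)
      = ((∏ i, V i ^ ((e p).1 i).val) * g ^ (e p).2.val * α ^ (-(c.val : ℤ)),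
          (e p).1, (e p).2) := by
    intro p
    have : (∏ i, V i ^ (p.1 i + c * S i).val) * g ^ (p.2 + c * ρ).val * α ^ (-(c.val : ℤ))
        = (∏ i, V i ^ (p.1 i).val) * g ^ p.2.val := by
      rw [zpow_neg, zpow_natCast, mul_inv_eq_iff_eq_mul, hα, mul_pow, ← pow_mul,
        ← Finset.prod_pow]
      have h1 : ∀ i : Fin n, V i ^ (p.1 i + c * S i).val
          = V i ^ (p.1 i).val * (V i ^ (S i).val) ^ c.val := by
        intro i
        rw [hadd, mul_comm c (S i), hmul]
      have h2 : g ^ (p.2 + c * ρ).val = g ^ p.2.val * (g ^ ρ.val) ^ c.val := by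
        rw [hadd, mul_comm c ρ, hmul]
      simp only [h1, h2, Finset.prod_mul_distrib, pow_mul]
      exact mul_mul_mul_comm _ _ _ _
    exact Prod.ext this.symm rfl
  calc (PMF.uniformOfFintype ((Fin n → ZMod q) × ZMod q)).map
        (fun Bb => ((∏ i, V i ^ (Bb.1 i).val) * g ^ Bb.2.val,
                    fun i => Bb.1 i + c * S i, Bb.2 + c * ρ))
      = (PMF.uniformOfFintype ((Fin n → ZMod q) × ZMod q)).map
        ((fun Yz => ((∏ i, V i ^ (Yz.1 i).val) * g ^ Yz.2.val * α ^ (-(c.val : ℤ)),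
                    Yz.1, Yz.2)) ∘ e) := by
        congr 1; funext p; exact hcomm p
    _ = ((PMF.uniformOfFintype ((Fin n → ZMod q) × ZMod q)).map e).map
        (fun Yz => ((∏ i, V i ^ (Yz.1 i).val) * g ^ Yz.2.val * α ^ (-(c.val : ℤ)),
                    Yz.1, Yz.2)) := by
        rw [PMF.map_comp]
    _ = _ := by rw [pmf_map_equiv_uniform]
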